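/- Let l : 𝐊 → 𝐋 be a morphism of polarized graphs and m : 𝐋 → 𝐆 a matching with 𝐆 = (𝐋 + 𝐋̄) +ₑ 𝐋̃ and every linking edge for m polarized. Then the polarized pushback (terminal polarized pullback complement) of (m, l) exists and is given by 𝐃 = (𝐊 + 𝐋̄) +ₑ 𝐊̃, where K̃ has one polarized edge (e, n_D, p_D) : n_D → p_D for each n_D ∈ D_N⁺, p_D ∈ D_N⁻ and each polarized linking edge e : l₁(n_D) → l₁(p_D) in L̃⋆, with l₁ = (l + id_{𝐋̄}) +ₑ l̃ and l̃(e, n_D, p_D) = e. -/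

import Mathlib

universe u

structure BaseGraph : Type (u + 1) where
  N : Type u
  E : Type u
  src : E → N
  tgt : E → N

@[ext]
structure GraphHom (X Y : BaseGraph.{u}) where
  fN : X.N → Y.N
  fE : X.E → Y.E
  hsrc : ∀ e, Y.src (fE e) = fN (X.src e)
  htgt : ∀ e, Y.tgt (fE e) = fN (X.tgt e)

def GraphHom.id (X : BaseGraph.{u}) : GraphHom X X :=
  ⟨_root_.id, _root_.id, fun _ => rfl, fun _ => rfl⟩

/-- `g.comp f` is the composite `g ∘ f`. -/
def GraphHom.comp {X Y Z : BaseGraph.{u}} (g : GraphHom Y Z) (f : GraphHom X Y) :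
    GraphHom X Z :=
  ⟨g.fN ∘ f.fN, g.fE ∘ f.fE,
    fun e => by simp [Function.comp, g.hsrc, f.hsrc],
    fun e => by simp [Function.comp, g.htgt, f.htgt]⟩

/-- A polarization of a graph: distinguished node subsets `N⁺`, `N⁻` and a
distinguished edge subset `E⋆` such that every edge in `E⋆` has its source
in `N⁺` and its target in `N⁻`. -/
structure Polarization (X : BaseGraph.{u}) where
  Np : Set X.N
  Nm : Set X.N
  Es : Set X.E
  hs : ∀ e ∈ Es, X.src e ∈ Np
  ht : ∀ e ∈ Es, X.tgt e ∈ Nm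

/-- A polarized graph: a graph together with a polarization. -/
structure PGraph : Type (u + 1) where
  toGraph : BaseGraph.{u}
  pol : Polarization toGraph

/-- A morphism of polarized graphs: a graph morphism preserving the three
distinguished subsets. -/
structure PGraphHom (X Y : PGraph.{u}) where
  toHom : GraphHom X.toGraph Y.toGraph
  hNp : ∀ n ∈ X.pol.Np, toHom.fN n ∈ Y.pol.Np
  hNm : ∀ n ∈ X.pol.Nm, toHom.fN n ∈ Y.pol.Nm
  hEs : ∀ e ∈ X.pol.Es, toHom.fE e ∈ Y.pol.Es

def PGraphHom.id (X : PGraph.{u}) : PGraphHom X X :=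
  ⟨GraphHom.id X.toGraph, fun _ h => h, fun _ h => h, fun _ h => h⟩

/-- `g.comp f` is the composite `g ∘ f`. -/
def PGraphHom.comp {X Y Z : PGraph.{u}} (g : PGraphHom Y Z) (f : PGraphHom X Y) :
    PGraphHom X Z :=
  ⟨g.toHom.comp f.toHom,
    fun n h => g.hNp _ (f.hNp n h),
    fun n h => g.hNm _ (f.hNm n h),
    fun e h => g.hEs _ (f.hEs e h)⟩

section
variable (X Xbar : BaseGraph.{u}) (Xt : Type u) (xs xt : Xt → X.N ⊕ Xbar.N)

/-- The graph `(X + Xbar) +ₑ Xt` built from decomposition data. -/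
def sumGraph : BaseGraph.{u} where
  N := X.N ⊕ Xbar.N
  E := X.E ⊕ Xbar.E ⊕ Xt
  src := Sum.elim (Sum.inl ∘ X.src) (Sum.elim (Sum.inr ∘ Xbar.src) xs)
  tgt := Sum.elim (Sum.inl ∘ X.tgt) (Sum.elim (Sum.inr ∘ Xbar.tgt) xt)

/-- The canonical inclusion (a monomorphism) `X → (X + Xbar) +ₑ Xt`. -/
def sumIncl : GraphHom X (sumGraph X Xbar Xt xs xt) :=
  ⟨Sum.inl, Sum.inl, fun _ => rfl, fun _ => rfl⟩

end

section
variable (K L Lbar : PGraph.{u}) (l : PGraphHom K L)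
variable (Lt : Type u) (ls lt : Lt → L.toGraph.N ⊕ Lbar.toGraph.N)
variable (hls : ∀ e, Sum.elim (· ∈ L.pol.Np) (· ∈ Lbar.pol.Np) (ls e))
variable (hlt : ∀ e, Sum.elim (· ∈ L.pol.Nm) (· ∈ Lbar.pol.Nm) (lt e))

/-- The polarized graph `G = (L + Lbar) +ₑ Lt`, where every linking edge is
polarized (`Lt⋆ = Lt`). -/
def polG : PGraph.{u} where
  toGraph := sumGraph L.toGraph Lbar.toGraph Lt ls lt
  pol :=
  { Np := fun n => Sum.elim (· ∈ L.pol.Np) (· ∈ Lbar.pol.Np) n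
    Nm := fun n => Sum.elim (· ∈ L.pol.Nm) (· ∈ Lbar.pol.Nm) n
    Es := fun e =>
      Sum.elim (· ∈ L.pol.Es) (Sum.elim (· ∈ Lbar.pol.Es) (fun _ => True)) e
    hs := by
      rintro (e | e | e) he
      · exact L.pol.hs e he
      · exact Lbar.pol.hs e he
      · exact hls e
    ht := by
      rintro (e | e | e) he
      · exact L.pol.ht e he
      · exact Lbar.pol.ht e he
      · exact hlt e }

/-- The matching `m : L → G` (the canonical inclusion). -/
def polm : PGraphHom L (polG L Lbar Lt ls lt hls hlt) where
  toHom := sumIncl L.toGraph Lbar.toGraph Lt ls lt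
  hNp := fun _ h => h
  hNm := fun _ h => h
  hEs := fun _ h => h

/-- The linking edges of the polarized pushback: one (polarized) edge
`(e, n_D, p_D) : n_D → p_D` for each `n_D ∈ D⁺`, `p_D ∈ D⁻` and each
(polarized) linking edge `e : l₁ n_D → l₁ p_D` in `Lt`. -/
def polKt : Type u :=
  {x : ((K.toGraph.N ⊕ Lbar.toGraph.N) × (K.toGraph.N ⊕ Lbar.toGraph.N)) × Lt //
    Sum.elim (· ∈ K.pol.Np) (· ∈ Lbar.pol.Np) x.1.1 ∧
    Sum.elim (· ∈ K.pol.Nm) (· ∈ Lbar.pol.Nm) x.1.2 ∧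
    ls x.2 = Sum.map l.toHom.fN _root_.id x.1.1 ∧
    lt x.2 = Sum.map l.toHom.fN _root_.id x.1.2}

/-- The polarized pushback object `D = (K + Lbar) +ₑ Kt`. -/
def polD : PGraph.{u} where
  toGraph :=
  { N := K.toGraph.N ⊕ Lbar.toGraph.N
    E := K.toGraph.E ⊕ Lbar.toGraph.E ⊕ polKt K L Lbar l Lt ls lt
    src := Sum.elim (Sum.inl ∘ K.toGraph.src)
      (Sum.elim (Sum.inr ∘ Lbar.toGraph.src) (fun x => x.1.1.1))
    tgt := Sum.elim (Sum.inl ∘ K.toGraph.tgt)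
      (Sum.elim (Sum.inr ∘ Lbar.toGraph.tgt) (fun x => x.1.1.2)) }
  pol :=
  { Np := fun n => Sum.elim (· ∈ K.pol.Np) (· ∈ Lbar.pol.Np) n
    Nm := fun n => Sum.elim (· ∈ K.pol.Nm) (· ∈ Lbar.pol.Nm) n
    Es := fun e =>
      Sum.elim (· ∈ K.pol.Es) (Sum.elim (· ∈ Lbar.pol.Es) (fun _ => True)) e
    hs := by
      rintro (e | e | e) he
      · exact K.pol.hs e he
      · exact Lbar.pol.hs e he
      · exact e.2.1
    ht := by
      rintro (e | e | e) he
      · exact K.pol.ht e he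
      · exact Lbar.pol.ht e he
      · exact e.2.2.1 }

/-- The canonical inclusion `d : K → D` (a matching). -/
def pold : PGraphHom K (polD K L Lbar l Lt ls lt) where
  toHom := ⟨Sum.inl, Sum.inl, fun _ => rfl, fun _ => rfl⟩
  hNp := fun _ h => h
  hNm := fun _ h => h
  hEs := fun _ h => h

/-- The morphism `l₁ = (l + id) +ₑ l̃ : D → G`, `l̃ (e, n_D, p_D) = e`. -/
def poll1 :
    PGraphHom (polD K L Lbar l Lt ls lt) (polG L Lbar Lt ls lt hls hlt) where
  toHom :=
  { fN := Sum.map l.toHom.fN _root_.id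
    fE := Sum.map l.toHom.fE (Sum.map _root_.id (fun x => x.1.2))
    hsrc := by
      rintro (e | e | e) <;>
        simp [polD, polG, sumGraph, l.toHom.hsrc]
      exact e.2.2.2.1
    htgt := by
      rintro (e | e | e) <;>
        simp [polD, polG, sumGraph, l.toHom.htgt]
      exact e.2.2.2.2 }
  hNp := by
    rintro (n | n) hn
    · exact l.hNp n hn
    · exact hn
  hNm := by
    rintro (n | n) hn
    · exact l.hNm n hn
    · exact hn
  hEs := by
    rintro (e | e | e) he
    · exact l.hEs e he
    · exact he
    · trivial

end

/-- `(l, d)` is the pullback of `(m, l₁)` in the category of polarized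
graphs, i.e. `(l₁, d)` is a pullback complement of `(m, l)`. -/
def IsPPullbackSquare {K L D G : PGraph.{u}} (l : PGraphHom K L)
    (d : PGraphHom K D) (m : PGraphHom L G) (l₁ : PGraphHom D G) : Prop :=
  m.comp l = l₁.comp d ∧
  ∀ (K' : PGraph.{u}) (l' : PGraphHom K' L) (d' : PGraphHom K' D),
    m.comp l' = l₁.comp d' →
    ∃! κ : PGraphHom K' K, l.comp κ = l' ∧ d.comp κ = d'

/-- All linking edges for `f` are polarized: every edge of the codomain not
in the image of `f` but with some endpoint in the image of `f` is polarized. -/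
def LinkPolarized {X Y : PGraph.{u}} (f : PGraphHom X Y) : Prop :=
  ∀ e : Y.toGraph.E, e ∉ Set.range f.toHom.fE →
    (Y.toGraph.src e ∈ Set.range f.toHom.fN ∨
     Y.toGraph.tgt e ∈ Set.range f.toHom.fN) →
    e ∈ Y.pol.Es

/-- A polarized pullback complement of `(m, l)`: a pullback complement such
that every linking edge for `m` and for `d` is polarized. -/
def IsPolarizedPBC {K L D G : PGraph.{u}} (m : PGraphHom L G)
    (l : PGraphHom K L) (d : PGraphHom K D) (l₁ : PGraphHom D G) : Prop :=
  IsPPullbackSquare l d m l₁ ∧ LinkPolarized m ∧ LinkPolarized d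

theorem PGraphHom.ext' {X Y : PGraph.{u}} {f g : PGraphHom X Y}
    (hN : f.toHom.fN = g.toHom.fN) (hE : f.toHom.fE = g.toHom.fE) : f = g := by
  cases f; cases g
  congr 1
  exact GraphHom.ext hN hE

/-- One-point polarized graph; `P`/`M` control whether the point is in `N⁺`/`N⁻`. -/
def ptPG (P M : Prop) : PGraph.{u} where
  toGraph := ⟨PUnit, PEmpty, PEmpty.elim, PEmpty.elim⟩
  pol := ⟨{_x | P}, {_x | M}, ∅, fun e _ => e.elim, fun e _ => e.elim⟩

def ptHom (P M : Prop) (X : PGraph.{u}) (n : X.toGraph.N)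
    (hP : P → n ∈ X.pol.Np) (hM : M → n ∈ X.pol.Nm) : PGraphHom (ptPG P M) X :=
  ⟨⟨fun _ => n, PEmpty.elim, fun e => e.elim, fun e => e.elim⟩,
   fun _ h => hP h, fun _ h => hM h, fun e _ => e.elim⟩

/-- One-edge polarized graph; `P` controls whether the edge (and its
endpoints) are polarized. -/
def egPG (P : Prop) : PGraph.{u} where
  toGraph := ⟨ULift Bool, PUnit, fun _ => ⟨false⟩, fun _ => ⟨true⟩⟩
  pol := ⟨{x | P ∧ x.down = false}, {x | P ∧ x.down = true}, {_e | P},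
    fun _ h => ⟨h, rfl⟩, fun _ h => ⟨h, rfl⟩⟩

def egHom (P : Prop) (X : PGraph.{u}) (e : X.toGraph.E)
    (hP : P → e ∈ X.pol.Es) : PGraphHom (egPG P) X where
  toHom :=
  { fN := fun b => if b.down then X.toGraph.tgt e else X.toGraph.src e
    fE := fun _ => e
    hsrc := fun _ => by simp [egPG]
    htgt := fun _ => by simp [egPG] }
  hNp := fun n h => by
    show (if n.down then _ else _) ∈ _
    rw [h.2]
    simpa using X.pol.hs e (hP h.1)
  hNm := fun n h => by
    show (if n.down then _ else _) ∈ _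
    rw [h.2]
    simpa using X.pol.ht e (hP h.1)
  hEs := fun _ h => hP h

section Lifts
variable {K L Lbar : PGraph.{u}} {l : PGraphHom K L}
variable {Lt : Type u} {ls lt : Lt → L.toGraph.N ⊕ Lbar.toGraph.N}
variable {hls : ∀ e, Sum.elim (· ∈ L.pol.Np) (· ∈ Lbar.pol.Np) (ls e)}
variable {hlt : ∀ e, Sum.elim (· ∈ L.pol.Nm) (· ∈ Lbar.pol.Nm) (lt e)}
variable {D' : PGraph.{u}} {d' : PGraphHom K D'}
variable {l₁' : PGraphHom D' (polG L Lbar Lt ls lt hls hlt)}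
variable (hpb : ∀ (K'' : PGraph.{u}) (l'' : PGraphHom K'' L) (d'' : PGraphHom K'' D'),
    (polm L Lbar Lt ls lt hls hlt).comp l'' = l₁'.comp d'' →
    ∃! κ : PGraphHom K'' K, l.comp κ = l'' ∧ d'.comp κ = d'')

include hpb

theorem node_lift (x : D'.toGraph.N) (a : L.toGraph.N)
    (h : l₁'.toHom.fN x = Sum.inl a) (P M : Prop)
    (hPa : P → a ∈ L.pol.Np) (hPx : P → x ∈ D'.pol.Np)
    (hMa : M → a ∈ L.pol.Nm) (hMx : M → x ∈ D'.pol.Nm) :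
    ∃ k : K.toGraph.N, d'.toHom.fN k = x ∧ l.toHom.fN k = a ∧
      (P → k ∈ K.pol.Np) ∧ (M → k ∈ K.pol.Nm) := by
  obtain ⟨κ, ⟨hκl, hκd⟩, -⟩ := hpb (ptPG P M) (ptHom P M L a hPa hMa)
    (ptHom P M D' x hPx hMx)
    (by
      apply PGraphHom.ext'
      · funext _
        exact h.symm
      · funext e
        exact e.elim)
  refine ⟨κ.toHom.fN ⟨⟩, ?_, ?_, ?_, ?_⟩
  · exact congrFun (congrArg (fun f => f.toHom.fN) hκd) ⟨⟩
  · exact congrFun (congrArg (fun f => f.toHom.fN) hκl) ⟨⟩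
  · exact fun hp => κ.hNp ⟨⟩ hp
  · exact fun hm => κ.hNm ⟨⟩ hm

theorem node_inj (hsq : (polm L Lbar Lt ls lt hls hlt).comp l = l₁'.comp d')
    {k₁ k₂ : K.toGraph.N} (h : d'.toHom.fN k₁ = d'.toHom.fN k₂) : k₁ = k₂ := by
  have hN0 : ∀ k, l₁'.toHom.fN (d'.toHom.fN k) = Sum.inl (l.toHom.fN k) :=
    fun k => (congrFun (congrArg (fun f => f.toHom.fN) hsq) k).symm
  have hl : l.toHom.fN k₁ = l.toHom.fN k₂ := by
    have := (hN0 k₁).symm.trans (by rw [h, hN0 k₂] : l₁'.toHom.fN (d'.toHom.fN k₁) = Sum.inl (l.toHom.fN k₂))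
    exact Sum.inl.injEq _ _ ▸ this
  obtain ⟨κ, -, huniq⟩ := hpb (ptPG False False)
    (ptHom False False L (l.toHom.fN k₁) False.elim False.elim)
    (ptHom False False D' (d'.toHom.fN k₁) False.elim False.elim)
    (by
      apply PGraphHom.ext'
      · funext _
        exact (hN0 k₁).symm
      · funext e
        exact e.elim)
  have key : ∀ k : K.toGraph.N, d'.toHom.fN k = d'.toHom.fN k₁ →
      l.toHom.fN k = l.toHom.fN k₁ →
      ptHom False False K k False.elim False.elim = κ := by
    intro k hd hle
    apply huniq
    constructor <;> apply PGraphHom.ext' <;> funext x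
    · exact hle
    · exact x.elim
    · exact hd
    · exact x.elim
  have := (key k₁ rfl rfl).trans (key k₂ h.symm hl.symm).symm
  exact congrFun (congrArg (fun f => f.toHom.fN) this) ⟨⟩

theorem edge_lift (e' : D'.toGraph.E) (eL : L.toGraph.E)
    (h : l₁'.toHom.fE e' = Sum.inl eL) (P : Prop)
    (hPL : P → eL ∈ L.pol.Es) (hPe : P → e' ∈ D'.pol.Es) :
    ∃ eK : K.toGraph.E, d'.toHom.fE eK = e' ∧ l.toHom.fE eK = eL ∧
      (P → eK ∈ K.pol.Es) := by
  obtain ⟨κ, ⟨hκl, hκd⟩, -⟩ := hpb (egPG P) (egHom P L eL hPL) (egHom P D' e' hPe)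
    (by
      apply PGraphHom.ext'
      · funext b
        show Sum.inl (if b.down then _ else _) =
          l₁'.toHom.fN (if b.down then _ else _)
        rcases b with ⟨_ | _⟩
        · show Sum.inl (L.toGraph.src eL) = l₁'.toHom.fN (D'.toGraph.src e')
          rw [← l₁'.toHom.hsrc, h]
          rfl
        · show Sum.inl (L.toGraph.tgt eL) = l₁'.toHom.fN (D'.toGraph.tgt e')
          rw [← l₁'.toHom.htgt, h]
          rfl
      · funext _
        exact h.symm)
  refine ⟨κ.toHom.fE ⟨⟩, ?_, ?_, ?_⟩
  · exact congrFun (congrArg (fun f => f.toHom.fE) hκd) ⟨⟩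
  · exact congrFun (congrArg (fun f => f.toHom.fE) hκl) ⟨⟩
  · exact fun hp => κ.hEs ⟨⟩ hp

theorem edge_inj (hsq : (polm L Lbar Lt ls lt hls hlt).comp l = l₁'.comp d')
    {e₁ e₂ : K.toGraph.E} (h : d'.toHom.fE e₁ = d'.toHom.fE e₂) : e₁ = e₂ := by
  have hE0 : ∀ e, l₁'.toHom.fE (d'.toHom.fE e) = Sum.inl (l.toHom.fE e) :=
    fun e => (congrFun (congrArg (fun f => f.toHom.fE) hsq) e).symm
  have hl : l.toHom.fE e₁ = l.toHom.fE e₂ := by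
    have := (hE0 e₁).symm.trans (by rw [h, hE0 e₂] : l₁'.toHom.fE (d'.toHom.fE e₁) = Sum.inl (l.toHom.fE e₂))
    exact Sum.inl.injEq _ _ ▸ this
  obtain ⟨κ, -, huniq⟩ := hpb (egPG False)
    (egHom False L (l.toHom.fE e₁) False.elim)
    (egHom False D' (d'.toHom.fE e₁) False.elim)
    (by
      apply PGraphHom.ext'
      · funext b
        rcases b with ⟨_ | _⟩
        · show Sum.inl (L.toGraph.src _) = l₁'.toHom.fN (D'.toGraph.src _)
          rw [← l₁'.toHom.hsrc, hE0 e₁]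
          rfl
        · show Sum.inl (L.toGraph.tgt _) = l₁'.toHom.fN (D'.toGraph.tgt _)
          rw [← l₁'.toHom.htgt, hE0 e₁]
          rfl
      · funext _
        exact (hE0 e₁).symm)
  have key : ∀ (e : K.toGraph.E), d'.toHom.fE e = d'.toHom.fE e₁ →
      l.toHom.fE e = l.toHom.fE e₁ → egHom False K e False.elim = κ := by
    intro e hd hle
    apply huniq
    constructor <;> apply PGraphHom.ext' <;> funext x
    · show l.toHom.fN (if x.down then _ else _) = (if x.down then _ else _)
      rcases x with ⟨_ | _⟩
      · show l.toHom.fN (K.toGraph.src e) = L.toGraph.src (l.toHom.fE e₁)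
        rw [← hle, l.toHom.hsrc]
      · show l.toHom.fN (K.toGraph.tgt e) = L.toGraph.tgt (l.toHom.fE e₁)
        rw [← hle, l.toHom.htgt]
    · exact hle
    · show d'.toHom.fN (if x.down then _ else _) = (if x.down then _ else _)
      rcases x with ⟨_ | _⟩
      · show d'.toHom.fN (K.toGraph.src e) = D'.toGraph.src (d'.toHom.fE e₁)
        rw [← hd, d'.toHom.hsrc]
      · show d'.toHom.fN (K.toGraph.tgt e) = D'.toGraph.tgt (d'.toHom.fE e₁)
        rw [← hd, d'.toHom.htgt]
    · exact hd
  have := (key e₁ rfl rfl).trans (key e₂ h.symm hl.symm).symm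
  exact congrFun (congrArg (fun f => f.toHom.fE) this) ⟨⟩

end Lifts

section Part1
variable (K L Lbar : PGraph.{u}) (l : PGraphHom K L)
variable (Lt : Type u) (ls lt : Lt → L.toGraph.N ⊕ Lbar.toGraph.N)
variable (hls : ∀ e, Sum.elim (· ∈ L.pol.Np) (· ∈ Lbar.pol.Np) (ls e))
variable (hlt : ∀ e, Sum.elim (· ∈ L.pol.Nm) (· ∈ Lbar.pol.Nm) (lt e))

theorem part1 :
    IsPolarizedPBC (polm L Lbar Lt ls lt hls hlt) l
      (pold K L Lbar l Lt ls lt) (poll1 K L Lbar l Lt ls lt hls hlt) := by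
  refine ⟨⟨?_, ?_⟩, ?_, ?_⟩
  · apply PGraphHom.ext' <;> funext x <;> rfl
  · intro K' l' d' hc
    have hcN : ∀ n, (Sum.inl (l'.toHom.fN n) : (polG L Lbar Lt ls lt hls hlt).toGraph.N) =
        Sum.map l.toHom.fN _root_.id (d'.toHom.fN n) :=
      fun n => congrFun (congrArg (fun f => f.toHom.fN) hc) n
    have hcE : ∀ e, (Sum.inl (l'.toHom.fE e) : (polG L Lbar Lt ls lt hls hlt).toGraph.E) =
        Sum.map l.toHom.fE (Sum.map _root_.id (fun x => x.1.2)) (d'.toHom.fE e) :=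
      fun e => congrFun (congrArg (fun f => f.toHom.fE) hc) e
    have keyN : ∀ n, ∃ k, d'.toHom.fN n = Sum.inl k ∧ l.toHom.fN k = l'.toHom.fN n := by
      intro n
      have := hcN n
      rcases hd : d'.toHom.fN n with k | b <;> rw [hd] at this <;>
        simp only [Sum.map_inl, Sum.map_inr, Sum.inl.injEq] at this
      · exact ⟨k, rfl, this.symm⟩
      · exact absurd this (by simp)
    have keyE : ∀ e, ∃ eK, d'.toHom.fE e = Sum.inl eK ∧
        l.toHom.fE eK = l'.toHom.fE e := by
      intro e
      have := hcE e
      rcases hd : d'.toHom.fE e with eK | eb <;> rw [hd] at this <;>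
        simp only [Sum.map_inl, Sum.map_inr, Sum.inl.injEq] at this
      · exact ⟨eK, rfl, this.symm⟩
      · exact absurd this (by simp)
    refine ⟨⟨⟨fun n => (keyN n).choose, fun e => (keyE e).choose, ?_, ?_⟩, ?_, ?_, ?_⟩,
      ⟨?_, ?_⟩, ?_⟩
    · -- hsrc
      intro e
      have h1 : d'.toHom.fN (K'.toGraph.src e) = Sum.inl ((keyN _).choose) :=
        (keyN _).choose_spec.1
      have h2 : d'.toHom.fE e = Sum.inl ((keyE e).choose) := (keyE e).choose_spec.1
      have h3 := d'.toHom.hsrc e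
      rw [h1, h2] at h3
      exact Sum.inl_injective h3
    · -- htgt
      intro e
      have h1 : d'.toHom.fN (K'.toGraph.tgt e) = Sum.inl ((keyN _).choose) :=
        (keyN _).choose_spec.1
      have h2 : d'.toHom.fE e = Sum.inl ((keyE e).choose) := (keyE e).choose_spec.1
      have h3 := d'.toHom.htgt e
      rw [h1, h2] at h3
      exact Sum.inl_injective h3
    · -- hNp
      intro n hn
      have := d'.hNp n hn
      rw [(keyN n).choose_spec.1] at this
      exact this
    · intro n hn
      have := d'.hNm n hn
      rw [(keyN n).choose_spec.1] at this
      exact this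
    · intro e he
      have := d'.hEs e he
      rw [(keyE e).choose_spec.1] at this
      exact this
    · -- l.comp κ = l'
      apply PGraphHom.ext'
      · funext n
        exact (keyN n).choose_spec.2
      · funext e
        exact (keyE e).choose_spec.2
    · -- d.comp κ = d'
      apply PGraphHom.ext'
      · funext n
        exact ((keyN n).choose_spec.1).symm
      · funext e
        exact ((keyE e).choose_spec.1).symm
    · -- uniqueness
      rintro κ₂ ⟨-, hκd⟩
      apply PGraphHom.ext'
      · funext n
        have : Sum.inl (κ₂.toHom.fN n) = d'.toHom.fN n :=
          congrFun (congrArg (fun f => f.toHom.fN) hκd) n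
        rw [(keyN n).choose_spec.1] at this
        exact Sum.inl_injective this
      · funext e
        have : Sum.inl (κ₂.toHom.fE e) = d'.toHom.fE e :=
          congrFun (congrArg (fun f => f.toHom.fE) hκd) e
        rw [(keyE e).choose_spec.1] at this
        exact Sum.inl_injective this
  · -- LinkPolarized polm
    rintro (e | e | e) he hend
    · exact absurd ⟨e, rfl⟩ he
    · rcases hend with ⟨a, ha⟩ | ⟨a, ha⟩ <;> exact absurd ha (by simp [polm, sumIncl, polG, sumGraph])
    · trivial
  · -- LinkPolarized pold
    rintro (e | e | e) he hend
    · exact absurd ⟨e, rfl⟩ he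
    · rcases hend with ⟨a, ha⟩ | ⟨a, ha⟩ <;> exact absurd ha (by simp [pold, polD])
    · trivial

end Part1

section Part2
variable {K L Lbar : PGraph.{u}} {l : PGraphHom K L}
variable {Lt : Type u} {ls lt : Lt → L.toGraph.N ⊕ Lbar.toGraph.N}
variable {hls : ∀ e, Sum.elim (· ∈ L.pol.Np) (· ∈ Lbar.pol.Np) (ls e)}
variable {hlt : ∀ e, Sum.elim (· ∈ L.pol.Nm) (· ∈ Lbar.pol.Nm) (lt e)}
variable {D' : PGraph.{u}} {d' : PGraphHom K D'}
variable {l₁' : PGraphHom D' (polG L Lbar Lt ls lt hls hlt)}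

theorem part2 (hPBC : IsPolarizedPBC (polm L Lbar Lt ls lt hls hlt) l d' l₁') :
    ∃! δ : PGraphHom D' (polD K L Lbar l Lt ls lt),
      δ.comp d' = pold K L Lbar l Lt ls lt ∧
      (poll1 K L Lbar l Lt ls lt hls hlt).comp δ = l₁' := by
  obtain ⟨⟨hsq, hpb⟩, -, hld⟩ := hPBC
  have hN0 : ∀ k, l₁'.toHom.fN (d'.toHom.fN k) = Sum.inl (l.toHom.fN k) :=
    fun k => (congrFun (congrArg (fun f => f.toHom.fN) hsq) k).symm
  have hE0 : ∀ e, l₁'.toHom.fE (d'.toHom.fE e) = Sum.inl (l.toHom.fE e) :=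
    fun e => (congrFun (congrArg (fun f => f.toHom.fE) hsq) e).symm
  have ninj : ∀ {k₁ k₂}, d'.toHom.fN k₁ = d'.toHom.fN k₂ → k₁ = k₂ :=
    fun h => node_inj hpb hsq h
  have einj : ∀ {e₁ e₂}, d'.toHom.fE e₁ = d'.toHom.fE e₂ → e₁ = e₂ :=
    fun h => edge_inj hpb hsq h
  -- construction of the node map
  have δNex : ∀ x : D'.toGraph.N, ∃ y : (polD K L Lbar l Lt ls lt).toGraph.N,
      Sum.map l.toHom.fN _root_.id y = l₁'.toHom.fN x ∧
      (∀ k, y = Sum.inl k → d'.toHom.fN k = x) ∧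
      (x ∈ D'.pol.Np → y ∈ (polD K L Lbar l Lt ls lt).pol.Np) ∧
      (x ∈ D'.pol.Nm → y ∈ (polD K L Lbar l Lt ls lt).pol.Nm) := by
    intro x
    rcases hx : l₁'.toHom.fN x with a | b
    · obtain ⟨k, hk1, hk2, hk3, hk4⟩ := node_lift hpb x a hx
        (x ∈ D'.pol.Np) (x ∈ D'.pol.Nm)
        (fun hp => by have := l₁'.hNp x hp; rw [hx] at this; exact this)
        (fun hp => hp)
        (fun hm => by have := l₁'.hNm x hm; rw [hx] at this; exact this)
        (fun hm => hm)
      refine ⟨Sum.inl k, by simp [hk2], ?_, fun hp => hk3 hp, fun hm => hk4 hm⟩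
      intro k' hk'
      rw [← Sum.inl_injective hk']
      exact hk1
    · refine ⟨Sum.inr b, by simp, fun k hk => by simp at hk, ?_, ?_⟩
      · intro hp
        have := l₁'.hNp x hp
        rw [hx] at this
        exact this
      · intro hm
        have := l₁'.hNm x hm
        rw [hx] at this
        exact this
  choose δN h1 h2 h3 h4 using δNex
  have δNd : ∀ k, δN (d'.toHom.fN k) = Sum.inl k := by
    intro k
    rcases hy : δN (d'.toHom.fN k) with k0 | b
    · rw [ninj (h2 _ k0 hy)]
    · have := h1 (d'.toHom.fN k)
      rw [hy, hN0] at this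
      simp at this
  -- construction of the edge map
  have δEex : ∀ e' : D'.toGraph.E, ∃ y : (polD K L Lbar l Lt ls lt).toGraph.E,
      Sum.map l.toHom.fE (Sum.map _root_.id (fun x => x.1.2)) y = l₁'.toHom.fE e' ∧
      (∀ eK, y = Sum.inl eK → d'.toHom.fE eK = e') ∧
      (e' ∈ D'.pol.Es → y ∈ (polD K L Lbar l Lt ls lt).pol.Es) ∧
      (polD K L Lbar l Lt ls lt).toGraph.src y = δN (D'.toGraph.src e') ∧
      (polD K L Lbar l Lt ls lt).toGraph.tgt y = δN (D'.toGraph.tgt e') := by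
    intro e'
    have hsx : Sum.map l.toHom.fN _root_.id (δN (D'.toGraph.src e')) =
        (polG L Lbar Lt ls lt hls hlt).toGraph.src (l₁'.toHom.fE e') := by
      rw [h1, l₁'.toHom.hsrc]
    have htx : Sum.map l.toHom.fN _root_.id (δN (D'.toGraph.tgt e')) =
        (polG L Lbar Lt ls lt hls hlt).toGraph.tgt (l₁'.toHom.fE e') := by
      rw [h1, l₁'.toHom.htgt]
    rcases he : l₁'.toHom.fE e' with eL | eb | et
    · -- an edge of L
      obtain ⟨eK, hk1, hk2, hk3⟩ := edge_lift hpb e' eL he (e' ∈ D'.pol.Es)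
        (fun hp => by have := l₁'.hEs e' hp; rw [he] at this; exact this)
        (fun hp => hp)
      refine ⟨Sum.inl eK, by simp [hk2], ?_, fun hp => hk3 hp, ?_, ?_⟩
      · intro eK' hk'
        rw [← Sum.inl_injective hk']
        exact hk1
      · rw [he] at hsx
        rcases hy : δN (D'.toGraph.src e') with k | b
        · have hd0 : d'.toHom.fN k = D'.toGraph.src e' := h2 _ k hy
          have hd1 : d'.toHom.fN (K.toGraph.src eK) = D'.toGraph.src e' := by
            rw [← hk1, ← d'.toHom.hsrc]
          show Sum.inl (K.toGraph.src eK) = Sum.inl k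
          rw [ninj (hd1.trans hd0.symm)]
        · rw [hy] at hsx
          simp [polG, sumGraph] at hsx
      · rw [he] at htx
        rcases hy : δN (D'.toGraph.tgt e') with k | b
        · have hd0 : d'.toHom.fN k = D'.toGraph.tgt e' := h2 _ k hy
          have hd1 : d'.toHom.fN (K.toGraph.tgt eK) = D'.toGraph.tgt e' := by
            rw [← hk1, ← d'.toHom.htgt]
          show Sum.inl (K.toGraph.tgt eK) = Sum.inl k
          rw [ninj (hd1.trans hd0.symm)]
        · rw [hy] at htx
          simp [polG, sumGraph] at htx
    · -- an edge of Lbar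
      refine ⟨Sum.inr (Sum.inl eb), by simp, fun eK hk => by simp at hk, ?_, ?_, ?_⟩
      · intro hp
        have := l₁'.hEs e' hp
        rw [he] at this
        exact this
      · rw [he] at hsx
        rcases hy : δN (D'.toGraph.src e') with k | b
        · rw [hy] at hsx
          simp [polG, sumGraph] at hsx
        · rw [hy] at hsx
          simp [polG, sumGraph] at hsx
          show Sum.inr (Lbar.toGraph.src eb) = Sum.inr b
          rw [hsx]
      · rw [he] at htx
        rcases hy : δN (D'.toGraph.tgt e') with k | b
        · rw [hy] at htx
          simp [polG, sumGraph] at htx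
        · rw [hy] at htx
          simp [polG, sumGraph] at htx
          show Sum.inr (Lbar.toGraph.tgt eb) = Sum.inr b
          rw [htx]
    · -- a linking edge
      rw [he] at hsx htx
      have hss : Sum.map l.toHom.fN _root_.id (δN (D'.toGraph.src e')) = ls et := hsx
      have htt : Sum.map l.toHom.fN _root_.id (δN (D'.toGraph.tgt e')) = lt et := htx
      have hrange : e' ∉ Set.range d'.toHom.fE := by
        rintro ⟨eK, rfl⟩
        rw [hE0] at he
        simp at he
      have hnp : Sum.elim (· ∈ K.pol.Np) (· ∈ Lbar.pol.Np) (δN (D'.toGraph.src e')) := by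
        rcases hy : δN (D'.toGraph.src e') with k | b
        · have hEs' : e' ∈ D'.pol.Es :=
            hld e' hrange (Or.inl ⟨k, h2 _ k hy⟩)
          have := h3 (D'.toGraph.src e') (D'.pol.hs e' hEs')
          rw [hy] at this
          exact this
        · have h5 := hls et
          rw [hy] at hss
          simp at hss
          rw [← hss] at h5
          exact h5
      have hnm : Sum.elim (· ∈ K.pol.Nm) (· ∈ Lbar.pol.Nm) (δN (D'.toGraph.tgt e')) := by
        rcases hy : δN (D'.toGraph.tgt e') with k | b
        · have hEs' : e' ∈ D'.pol.Es :=
            hld e' hrange (Or.inr ⟨k, h2 _ k hy⟩)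
          have := h4 (D'.toGraph.tgt e') (D'.pol.ht e' hEs')
          rw [hy] at this
          exact this
        · have h5 := hlt et
          rw [hy] at htt
          simp at htt
          rw [← htt] at h5
          exact h5
      refine ⟨Sum.inr (Sum.inr ⟨((δN (D'.toGraph.src e'), δN (D'.toGraph.tgt e')), et),
        hnp, hnm, hss.symm, htt.symm⟩), rfl, fun eK hk => by simp at hk,
        fun _ => trivial, rfl, rfl⟩
  choose δE e1 e2 e3 e4 e5 using δEex
  have δEd : ∀ eK, δE (d'.toHom.fE eK) = Sum.inl eK := by
    intro eK
    rcases hy : δE (d'.toHom.fE eK) with eK0 | z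
    · rw [einj (e2 _ eK0 hy)]
    · have := e1 (d'.toHom.fE eK)
      rw [hy, hE0] at this
      rcases z with z | z <;> simp at this
  refine ⟨⟨⟨δN, δE, e4, e5⟩, h3, h4, e3⟩, ⟨?_, ?_⟩, ?_⟩
  · apply PGraphHom.ext'
    · funext k
      exact δNd k
    · funext eK
      exact δEd eK
  · apply PGraphHom.ext'
    · funext x
      exact h1 x
    · funext e'
      exact e1 e'
  · rintro δ₂ ⟨g1, g2⟩
    have g2N : ∀ x, Sum.map l.toHom.fN _root_.id (δ₂.toHom.fN x) = l₁'.toHom.fN x :=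
      fun x => congrFun (congrArg (fun f => f.toHom.fN) g2) x
    have g2E : ∀ e, Sum.map l.toHom.fE (Sum.map _root_.id (fun x => x.1.2))
        (δ₂.toHom.fE e) = l₁'.toHom.fE e :=
      fun e => congrFun (congrArg (fun f => f.toHom.fE) g2) e
    have g1N : ∀ k, δ₂.toHom.fN (d'.toHom.fN k) = Sum.inl k :=
      fun k => congrFun (congrArg (fun f => f.toHom.fN) g1) k
    have g1E : ∀ eK, δ₂.toHom.fE (d'.toHom.fE eK) = Sum.inl eK :=
      fun eK => congrFun (congrArg (fun f => f.toHom.fE) g1) eK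
    have hNeq : ∀ x, δ₂.toHom.fN x = δN x := by
      intro x
      rcases hy : δN x with k | b
      · rw [← h2 x k hy, g1N]
      · have := g2N x
        rw [← h1 x, hy] at this
        rcases hz : δ₂.toHom.fN x with k2 | b2 <;> rw [hz] at this <;> simp at this
        rw [this]
    apply PGraphHom.ext'
    · funext x
      exact hNeq x
    · funext e'
      rcases hy : δE e' with eK | eb | z
      · rw [← e2 e' eK hy, g1E]
        exact (δEd eK).symm
      · have := g2E e'
        rw [← e1 e', hy] at this
        rcases hz : δ₂.toHom.fE e' with a | a | a <;> rw [hz] at this <;> simp at this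
        rw [this]
        exact hy.symm
      · have := g2E e'
        rw [← e1 e', hy] at this
        rcases hz : δ₂.toHom.fE e' with a | a | a <;> rw [hz] at this <;> simp at this
        have hs2 := δ₂.toHom.hsrc e'
        have ht2 := δ₂.toHom.htgt e'
        rw [hz, hNeq] at hs2 ht2
        have hsz := e4 e'
        have htz := e5 e'
        rw [hy] at hsz htz
        have : a = z := by
          apply Subtype.ext
          apply Prod.ext
          · apply Prod.ext
            · exact hs2.trans hsz.symm
            · exact ht2.trans htz.symm
          · exact this
        rw [this]
        exact hy.symm

end Part2

/-!
STATEMENT 15: let `l : K → L` be a morphism of polarized graphs and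
`m : L → G` a matching presented canonically via `G = (L + Lbar) +ₑ Lt`,
with every linking edge for `m` polarized.  Then the polarized pushback
(terminal polarized pullback complement) of `(m, l)` exists and is given by
`D = (K + Lbar) +ₑ Kt` as constructed above.
-/
theorem polarized_pushback (K L Lbar : PGraph.{u}) (l : PGraphHom K L)
    (Lt : Type u) (ls lt : Lt → L.toGraph.N ⊕ Lbar.toGraph.N)
    (hls : ∀ e, Sum.elim (· ∈ L.pol.Np) (· ∈ Lbar.pol.Np) (ls e))
    (hlt : ∀ e, Sum.elim (· ∈ L.pol.Nm) (· ∈ Lbar.pol.Nm) (lt e)) :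
    IsPolarizedPBC (polm L Lbar Lt ls lt hls hlt) l
      (pold K L Lbar l Lt ls lt) (poll1 K L Lbar l Lt ls lt hls hlt) ∧
    ∀ (D' : PGraph.{u}) (d' : PGraphHom K D')
      (l₁' : PGraphHom D' (polG L Lbar Lt ls lt hls hlt)),
      IsPolarizedPBC (polm L Lbar Lt ls lt hls hlt) l d' l₁' →
      ∃! δ : PGraphHom D' (polD K L Lbar l Lt ls lt),
        δ.comp d' = pold K L Lbar l Lt ls lt ∧
        (poll1 K L Lbar l Lt ls lt hls hlt).comp δ = l₁' := by
  exact ⟨part1 K L Lbar l Lt ls lt hls hlt, fun D' d' l₁' hPBC => part2 hPBC⟩
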